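/- Fix N ≥ 1 and let g ∈ L²([0,1]^{N+1}) be symmetric in its first N variables. If ∫₀¹ g(·,s) ⊗̃ g(·,s) ds = 0 almost everywhere on [0,1]^{2N} (where ⊗̃ denotes the symmetrized tensor product), then for every k = 1, …, N−1, ∫₀¹ g(·,s) ⊗̃_k g(·,s) ds = 0 almost everywhere on [0,1]^{2N−2k}. -/

import Mathlib

open MeasureTheory ProbabilityTheory Filter Topology
open scoped NNReal

noncomputable section

/-- `B` is a Brownian motion with respect to the filtration `𝓖` under `μ`. -/
def IsBrownianMotion {Ω : Type} {m0 : MeasurableSpace Ω} (μ : Measure Ω)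
    (𝓖 : Filtration ℝ≥0 m0) (B : ℝ≥0 → Ω → ℝ) : Prop :=
  (∀ t, Measurable[𝓖 t] (B t)) ∧
  (∀ᵐ ω ∂μ, B 0 ω = 0) ∧
  (∀ᵐ ω ∂μ, Continuous fun t => B t ω) ∧
  (∀ s t : ℝ≥0, s ≤ t → μ.map (fun ω => B t ω - B s ω) = gaussianReal 0 (t - s)) ∧
  (∀ s t : ℝ≥0, s ≤ t →
    Indep (𝓖 s) (MeasurableSpace.comap (fun ω => B t ω - B s ω) inferInstance) μ)

/-- `A` is the quadratic variation process of `M` (Doob–Meyer characterization). -/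
def IsQuadraticVariation {Ω : Type} {m0 : MeasurableSpace Ω} (μ : Measure Ω)
    (ℱ : Filtration ℝ≥0 m0) (M A : ℝ≥0 → Ω → ℝ) : Prop :=
  Adapted ℱ A ∧
  (∀ᵐ ω ∂μ, A 0 ω = 0 ∧ Monotone (fun t => A t ω) ∧ Continuous fun t => A t ω) ∧
  Martingale (fun t ω => (M t ω) ^ 2 - A t ω) ℱ μ

/-- The sign function, equal to `1` for `x ≥ 0` and `-1` for `x < 0`. -/
def sgn (x : ℝ) : ℝ := if 0 ≤ x then 1 else -1


/-- Lebesgue measure restricted to `[0,1]`. -/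
def unifMeas : Measure ℝ := volume.restrict (Set.Icc (0:ℝ) 1)

/-- The product measure on `[0,1]ⁿ`. -/
def cubeMeas (n : ℕ) : Measure (Fin n → ℝ) := Measure.pi fun _ => unifMeas

/-- Splice a vector of `N - k` variables with a vector of `k` variables into a vector of `N`
variables. -/
def splice (N k : ℕ) (x : Fin (N - k) → ℝ) (u : Fin k → ℝ) : Fin N → ℝ :=
  fun i => if h : (i : ℕ) < N - k then x ⟨i, h⟩ else u ⟨(i : ℕ) - (N - k), by omega⟩

/-- The (unsymmetrized) `k`-th contraction integral
`z ↦ ∫₀¹ (g(·,s) ⊗_k g(·,s))(z) ds` on `[0,1]^{2(N-k)}`, where the contraction integrates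
out `k` common variables. -/
def contrInt (N k : ℕ) (g : (Fin N → ℝ) → ℝ → ℝ) (z : Fin (2 * (N - k)) → ℝ) : ℝ :=
  ∫ s in Set.Icc (0:ℝ) 1,
    (∫ u : Fin k → ℝ,
      g (splice N k (fun j => z (Fin.castLE (by omega) j)) u) s *
      g (splice N k (fun j => z ⟨(N - k) + (j : ℕ), by omega⟩) u) s ∂(cubeMeas k))
    ∂volume

/-- Symmetrization of a function of `n` real variables. -/
def symmetrize (n : ℕ) (F : (Fin n → ℝ) → ℝ) : (Fin n → ℝ) → ℝ :=
  fun z => (n.factorial : ℝ)⁻¹ * ∑ σ : Equiv.Perm (Fin n), F (z ∘ σ)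





instance : IsProbabilityMeasure unifMeas :=
  ⟨by simp [unifMeas, Real.volume_Icc]⟩

instance (n : ℕ) : IsProbabilityMeasure (cubeMeas n) := by
  unfold cubeMeas; infer_instance

theorem MeasureTheory.MeasurePreserving.ae_comp {α β : Type*} [MeasurableSpace α] [MeasurableSpace β]
    {μ : Measure α} {ν : Measure β} {f : α → β} (hf : MeasurePreserving f μ ν)
    {p : β → Prop} (h : ∀ᵐ y ∂ν, p y) : ∀ᵐ x ∂μ, p (f x) :=
  ae_of_ae_map hf.measurable.aemeasurable (hf.map_eq.symm ▸ h)

theorem mp_fst {α β : Type*} [MeasurableSpace α] [MeasurableSpace β]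
    (μ : Measure α) (ν : Measure β) [IsProbabilityMeasure ν] [SFinite μ] :
    MeasurePreserving Prod.fst (μ.prod ν) μ :=
  ⟨measurable_fst, by simp⟩

theorem mp_snd {α β : Type*} [MeasurableSpace α] [MeasurableSpace β]
    (μ : Measure α) (ν : Measure β) [IsProbabilityMeasure μ] [SFinite μ] [SFinite ν] :
    MeasurePreserving Prod.snd (μ.prod ν) ν :=
  ⟨measurable_snd, by simp⟩

/-! ### permutation equivalence -/

def permFun (n : ℕ) (σ : Equiv.Perm (Fin n)) : (Fin n → ℝ) → (Fin n → ℝ) := fun z => z ∘ σ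

theorem measurable_permFun (n : ℕ) (σ : Equiv.Perm (Fin n)) : Measurable (permFun n σ) :=
  measurable_pi_lambda _ fun i => measurable_pi_apply _

def permEquiv (n : ℕ) (σ : Equiv.Perm (Fin n)) : (Fin n → ℝ) ≃ᵐ (Fin n → ℝ) where
  toEquiv :=
  { toFun := permFun n σ
    invFun := permFun n σ.symm
    left_inv := fun z => by funext i; simp [permFun]
    right_inv := fun z => by funext i; simp [permFun] }
  measurable_toFun := measurable_permFun n σ
  measurable_invFun := measurable_permFun n σ.symm

theorem permEquiv_apply (n : ℕ) (σ : Equiv.Perm (Fin n)) (z : Fin n → ℝ) :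
    permEquiv n σ z = z ∘ σ := rfl

theorem permEquiv_mp (n : ℕ) (σ : Equiv.Perm (Fin n)) :
    MeasurePreserving (permEquiv n σ) (cubeMeas n) (cubeMeas n) := by
  refine ⟨(permEquiv n σ).measurable, ?_⟩
  have : Measure.map (permEquiv n σ) (cubeMeas n) = Measure.pi (fun _ => unifMeas) := by
    refine (Measure.pi_eq (μ := fun _ : Fin n => unifMeas) fun B hB => ?_).symm
    rw [Measure.map_apply (permEquiv n σ).measurable (MeasurableSet.univ_pi hB)]
    have hpre : (permEquiv n σ) ⁻¹' (Set.univ.pi B) = Set.univ.pi (fun j => B (σ.symm j)) := by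
      ext z
      simp only [Set.mem_preimage, Set.mem_univ_pi, permEquiv_apply, Function.comp_apply]
      constructor
      · intro h j; have := h (σ.symm j); simpa using this
      · intro h i; have := h (σ i); simpa using this
    rw [hpre, show (cubeMeas n) = Measure.pi (fun _ => unifMeas) from rfl, Measure.pi_pi]
    exact Equiv.prod_comp σ.symm (fun i => unifMeas (B i))
  exact this

/-! ### splice equivalence -/

def spliceFun (a b n : ℕ) (h : a + b = n) (p : (Fin a → ℝ) × (Fin b → ℝ)) : Fin n → ℝ := fun i =>
  if hi : (i : ℕ) < a then p.1 ⟨i, hi⟩ else p.2 ⟨(i : ℕ) - a, by omega⟩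

def unspliceFun (a b n : ℕ) (h : a + b = n) (z : Fin n → ℝ) : (Fin a → ℝ) × (Fin b → ℝ) :=
  (fun j => z ⟨j, by omega⟩, fun j => z ⟨a + (j : ℕ), by omega⟩)

theorem spliceFun_lt (a b n : ℕ) (h : a + b = n) (p) (i : Fin n) (hi : (i : ℕ) < a) :
    spliceFun a b n h p i = p.1 ⟨i, hi⟩ := dif_pos hi

theorem spliceFun_ge (a b n : ℕ) (h : a + b = n) (p) (i : Fin n) (hi : ¬ (i : ℕ) < a) :
    spliceFun a b n h p i = p.2 ⟨(i : ℕ) - a, by omega⟩ := dif_neg hi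

theorem measurable_spliceFun (a b n : ℕ) (h : a + b = n) : Measurable (spliceFun a b n h) := by
  refine measurable_pi_lambda _ fun i => ?_
  by_cases hi : (i : ℕ) < a
  · simp only [spliceFun, dif_pos hi]
    exact (measurable_pi_apply _).comp measurable_fst
  · simp only [spliceFun, dif_neg hi]
    exact (measurable_pi_apply _).comp measurable_snd

def spliceEquiv (a b n : ℕ) (h : a + b = n) : ((Fin a → ℝ) × (Fin b → ℝ)) ≃ᵐ (Fin n → ℝ) where
  toEquiv :=
  { toFun := spliceFun a b n h
    invFun := unspliceFun a b n h
    left_inv := fun p => by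
      refine Prod.ext ?_ ?_
      · funext j
        show spliceFun a b n h p ⟨j, by omega⟩ = p.1 j
        rw [spliceFun_lt a b n h p _ (by simp [j.isLt])]
      · funext j
        show spliceFun a b n h p ⟨a + (j : ℕ), by omega⟩ = p.2 j
        rw [spliceFun_ge a b n h p _ (by simp)]
        exact congrArg p.2 (Fin.ext (by simp only [Fin.val_mk]; omega))
    right_inv := fun z => by
      funext i
      by_cases hi : (i : ℕ) < a
      · rw [spliceFun_lt a b n h _ i hi]
        exact congrArg z (Fin.ext rfl)
      · rw [spliceFun_ge a b n h _ i hi]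
        exact congrArg z (Fin.ext (by simp only [Fin.val_mk]; omega)) }
  measurable_toFun := measurable_spliceFun a b n h
  measurable_invFun := by
    refine Measurable.prod ?_ ?_ <;>
      exact measurable_pi_lambda _ fun j => measurable_pi_apply _

theorem spliceEquiv_apply (a b n : ℕ) (h : a + b = n) (p) :
    spliceEquiv a b n h p = spliceFun a b n h p := rfl

theorem spliceEquiv_mp (a b n : ℕ) (h : a + b = n) :
    MeasurePreserving (spliceEquiv a b n h) ((cubeMeas a).prod (cubeMeas b)) (cubeMeas n) := by
  refine ⟨(spliceEquiv a b n h).measurable, ?_⟩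
  have : Measure.map (spliceEquiv a b n h) ((cubeMeas a).prod (cubeMeas b))
      = Measure.pi (fun _ => unifMeas) := by
    refine (Measure.pi_eq (μ := fun _ : Fin n => unifMeas) fun B hB => ?_).symm
    rw [Measure.map_apply (spliceEquiv a b n h).measurable (MeasurableSet.univ_pi hB)]
    have hpre : (spliceEquiv a b n h) ⁻¹' (Set.univ.pi B) =
        (Set.univ.pi (fun j : Fin a => B ⟨j, by omega⟩)) ×ˢ
        (Set.univ.pi (fun j : Fin b => B ⟨a + (j : ℕ), by omega⟩)) := by
      ext p
      simp only [Set.mem_preimage, Set.mem_univ_pi, Set.mem_prod, spliceEquiv_apply]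
      constructor
      · intro hp
        constructor
        · intro j
          have := hp ⟨j, by omega⟩
          rwa [spliceFun_lt a b n h p _ (by simp [j.isLt])] at this
        · intro j
          have := hp ⟨a + (j : ℕ), by omega⟩
          rw [spliceFun_ge a b n h p _ (by simp)] at this
          convert this using 3
          all_goals first
          | exact Fin.ext (by simp only [Fin.val_mk]; omega)
          | exact (Fin.ext (by simp only [Fin.val_mk]; omega) : _).symm
          | (simp only [Fin.val_mk]; omega)
          | rfl
      · rintro ⟨h1, h2⟩ i
        by_cases hi : (i : ℕ) < a
        · rw [spliceFun_lt a b n h p i hi]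
          have := h1 ⟨i, hi⟩
          convert this using 3
          all_goals first
          | exact Fin.ext (by simp only [Fin.val_mk]; omega)
          | exact (Fin.ext (by simp only [Fin.val_mk]; omega) : _).symm
          | (simp only [Fin.val_mk]; omega)
          | rfl
        · rw [spliceFun_ge a b n h p i hi]
          have := h2 ⟨(i : ℕ) - a, by omega⟩
          convert this using 3
          all_goals first
          | exact Fin.ext (by simp only [Fin.val_mk]; omega)
          | exact (Fin.ext (by simp only [Fin.val_mk]; omega) : _).symm
          | (simp only [Fin.val_mk]; omega)
          | rfl
    rw [hpre, Measure.prod_prod]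
    rw [show (cubeMeas a) = Measure.pi (fun _ => unifMeas) from rfl,
      show (cubeMeas b) = Measure.pi (fun _ => unifMeas) from rfl,
      Measure.pi_pi, Measure.pi_pi]
    classical
    set F : ℕ → ENNReal := fun i => if hi : i < n then unifMeas (B ⟨i, hi⟩) else 1 with hF
    have h1 : (∏ j : Fin a, unifMeas (B ⟨(j : ℕ), by omega⟩)) = ∏ i ∈ Finset.range a, F i := by
      rw [← Fin.prod_univ_eq_prod_range (fun i => F i) a]
      refine Finset.prod_congr rfl fun j _ => ?_
      simp only [hF]
      rw [dif_pos (by omega : (j : ℕ) < n)]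
    have h2 : (∏ j : Fin b, unifMeas (B ⟨a + (j : ℕ), by omega⟩))
        = ∏ i ∈ Finset.range b, F (a + i) := by
      rw [← Fin.prod_univ_eq_prod_range (fun i => F (a + i)) b]
      refine Finset.prod_congr rfl fun j _ => ?_
      simp only [hF]
      rw [dif_pos (by omega : a + (j : ℕ) < n)]
    have h3 : (∏ i : Fin n, unifMeas (B i)) = ∏ i ∈ Finset.range n, F i := by
      rw [← Fin.prod_univ_eq_prod_range (fun i => F i) n]
      refine Finset.prod_congr rfl fun i _ => ?_
      simp only [hF]
      rw [dif_pos i.isLt]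
    rw [h1, h2]
    show _ = ∏ i : Fin n, unifMeas (B i)
    rw [h3, show Finset.range n = Finset.range (a + b) from congrArg _ (by omega),
      Finset.prod_range_add]
  unfold cubeMeas
  exact this


theorem contrInt_apply (N k : ℕ) (g : (Fin N → ℝ) → ℝ → ℝ) (z : Fin (2 * (N - k)) → ℝ) :
    contrInt N k g z = ∫ s, (∫ u : Fin k → ℝ,
      g (splice N k (fun j => z (Fin.castLE (by omega) j)) u) s *
      g (splice N k (fun j => z ⟨(N - k) + (j : ℕ), by omega⟩) u) s ∂(cubeMeas k))
    ∂unifMeas := rfl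

theorem splice_eq_spliceFun (N k : ℕ) (h : (N - k) + k = N) (x : Fin (N - k) → ℝ)
    (u : Fin k → ℝ) : splice N k x u = spliceFun (N - k) k N h (x, u) := rfl

theorem contrInt_zero_apply (N : ℕ) (g : (Fin N → ℝ) → ℝ → ℝ) (z : Fin (2 * N) → ℝ) :
    contrInt N 0 g z = ∫ s, g (fun i : Fin N => z ⟨(i : ℕ), by omega⟩) s *
      g (fun i : Fin N => z ⟨N + (i : ℕ), by omega⟩) s ∂unifMeas := by
  rw [contrInt_apply]
  refine integral_congr_ae (Filter.Eventually.of_forall fun s => ?_)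
  have h1 : ∀ u : Fin 0 → ℝ,
      splice N 0 (fun j : Fin (N - 0) => z (Fin.castLE (by omega) j)) u
      = fun i : Fin N => z ⟨(i : ℕ), by omega⟩ := by
    intro u; funext i
    show dite _ _ _ = _
    rw [dif_pos (show (i : ℕ) < N - 0 by omega)]
    rfl
  have h2 : ∀ u : Fin 0 → ℝ,
      splice N 0 (fun j : Fin (N - 0) => z ⟨(N - 0) + (j : ℕ), by omega⟩) u
      = fun i : Fin N => z ⟨N + (i : ℕ), by omega⟩ := by
    intro u; funext i
    show dite _ _ _ = _
    rw [dif_pos (show (i : ℕ) < N - 0 by omega)]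
    rfl
  simp only [h1, h2]
  rw [integral_const]
  simp
/-- splitting a product over `Fin n` -/
theorem prod_split {Mo : Type*} [CommMonoid Mo] (n1 n2 n : ℕ) (h : n1 + n2 = n)
    (f : Fin n → Mo) :
    (∏ i, f i) = (∏ j : Fin n1, f ⟨(j : ℕ), by omega⟩) *
      ∏ j : Fin n2, f ⟨n1 + (j : ℕ), by omega⟩ := by
  classical
  set F : ℕ → Mo := fun i => if hi : i < n then f ⟨i, hi⟩ else 1 with hF
  have h1 : (∏ j : Fin n1, f ⟨(j : ℕ), by omega⟩) = ∏ i ∈ Finset.range n1, F i := by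
    rw [← Fin.prod_univ_eq_prod_range (fun i => F i) n1]
    refine Finset.prod_congr rfl fun j _ => ?_
    simp only [hF]
    rw [dif_pos (by omega : (j : ℕ) < n)]
  have h2 : (∏ j : Fin n2, f ⟨n1 + (j : ℕ), by omega⟩) = ∏ i ∈ Finset.range n2, F (n1 + i) := by
    rw [← Fin.prod_univ_eq_prod_range (fun i => F (n1 + i)) n2]
    refine Finset.prod_congr rfl fun j _ => ?_
    simp only [hF]
    rw [dif_pos (by omega : n1 + (j : ℕ) < n)]
  have h3 : (∏ i : Fin n, f i) = ∏ i ∈ Finset.range n, F i := by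
    rw [← Fin.prod_univ_eq_prod_range (fun i => F i) n]
    refine Finset.prod_congr rfl fun i _ => ?_
    simp only [hF]
    rw [dif_pos i.isLt]
  rw [h1, h2, h3, show Finset.range n = Finset.range (n1 + n2) from congrArg _ (by omega),
    Finset.prod_range_add]

section Phiw

variable {N : ℕ} {g : (Fin N → ℝ) → ℝ → ℝ}

/-- Main analytic step 1: testing against `w ⊗ ... ⊗ w`. -/
theorem phiw (hmeas : Measurable (Function.uncurry g))
    (hL2 : MemLp (Function.uncurry g) 2 ((cubeMeas N).prod unifMeas))
    (h0 : ∀ᵐ z ∂(cubeMeas (2 * (N - 0))), symmetrize _ (contrInt N 0 g) z = 0)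
    (w : ℝ → ℝ) (hw : Measurable w) (C : ℝ) (hwb : ∀ t, |w t| ≤ C) :
    (fun s => ∫ x, g x s * ∏ i, w (x i) ∂cubeMeas N) =ᵐ[unifMeas] 0 := by
  have h0' : ∀ᵐ z ∂(cubeMeas (2 * N)), symmetrize (2 * N) (contrInt N 0 g) z = 0 := h0
  set M : Measure (Fin N → ℝ) := cubeMeas N with hM
  set U : Measure ℝ := unifMeas with hU
  set Q : Measure ((Fin N → ℝ) × (Fin N → ℝ)) := M.prod M with hQ
  have hGint : Integrable (Function.uncurry g) (M.prod U) := hL2.integrable one_le_two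
  have hG2int : Integrable (fun p => Function.uncurry g p ^ 2) (M.prod U) :=
    (memLp_two_iff_integrable_sq hL2.aestronglyMeasurable).mp hL2
  have hC0 : (0:ℝ) ≤ C := le_trans (abs_nonneg _) (hwb 0)
  set pw : (Fin N → ℝ) → ℝ := fun x => ∏ i, w (x i) with hpw
  have hpwm : Measurable pw := Finset.measurable_prod _ fun i _ => hw.comp (measurable_pi_apply i)
  have hpwb : ∀ x, |pw x| ≤ C ^ N := by
    intro x
    calc |∏ i, w (x i)| = ∏ i, |w (x i)| := by rw [Finset.abs_prod]
    _ ≤ ∏ _i : Fin N, C := Finset.prod_le_prod (fun i _ => abs_nonneg _) (fun i _ => hwb _)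
    _ = C ^ N := by simp [Finset.prod_const]
  set Φ : ℝ → ℝ := fun s => ∫ x, g x s * pw x ∂M with hΦ
  set K : ((Fin N → ℝ) × (Fin N → ℝ)) × ℝ → ℝ :=
    fun q => (g q.1.1 q.2 * pw q.1.1) * (g q.1.2 q.2 * pw q.1.2) with hK
  -- measurability of K
  have mg1 : Measurable fun q : ((Fin N → ℝ) × (Fin N → ℝ)) × ℝ => g q.1.1 q.2 :=
    hmeas.comp ((measurable_fst.fst).prodMk measurable_snd)
  have mg2 : Measurable fun q : ((Fin N → ℝ) × (Fin N → ℝ)) × ℝ => g q.1.2 q.2 :=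
    hmeas.comp ((measurable_fst.snd).prodMk measurable_snd)
  have hKm : Measurable K :=
    ((mg1.mul (hpwm.comp measurable_fst.fst))).mul (mg2.mul (hpwm.comp measurable_fst.snd))
  -- integrability of K
  have hmp1 : MeasurePreserving (fun q : ((Fin N → ℝ) × (Fin N → ℝ)) × ℝ => (q.1.1, q.2))
      (Q.prod U) (M.prod U) := (mp_fst M M).prod (MeasurePreserving.id U)
  have hmp2 : MeasurePreserving (fun q : ((Fin N → ℝ) × (Fin N → ℝ)) × ℝ => (q.1.2, q.2))
      (Q.prod U) (M.prod U) := (mp_snd M M).prod (MeasurePreserving.id U)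
  have hsq1 : Integrable (fun q : ((Fin N → ℝ) × (Fin N → ℝ)) × ℝ => g q.1.1 q.2 ^ 2)
      (Q.prod U) :=
    (hmp1.integrable_comp hG2int.aestronglyMeasurable).mpr hG2int
  have hsq2 : Integrable (fun q : ((Fin N → ℝ) × (Fin N → ℝ)) × ℝ => g q.1.2 q.2 ^ 2)
      (Q.prod U) :=
    (hmp2.integrable_comp hG2int.aestronglyMeasurable).mpr hG2int
  have hKint : Integrable K (Q.prod U) := by
    refine Integrable.mono (((hsq1.add hsq2)).const_mul (C ^ N * C ^ N / 2))
      hKm.aestronglyMeasurable ?_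
    refine Filter.Eventually.of_forall fun q => ?_
    have hb : |g q.1.1 q.2 * g q.1.2 q.2| ≤ (g q.1.1 q.2 ^ 2 + g q.1.2 q.2 ^ 2) / 2 := by
      rw [abs_mul]
      nlinarith [sq_nonneg (|g q.1.1 q.2| - |g q.1.2 q.2|), sq_abs (g q.1.1 q.2),
        sq_abs (g q.1.2 q.2), abs_nonneg (g q.1.1 q.2), abs_nonneg (g q.1.2 q.2)]
    have hp1 := hpwb q.1.1
    have hp2 := hpwb q.1.2
    have hCN : (0:ℝ) ≤ C ^ N := pow_nonneg hC0 N
    rw [Real.norm_eq_abs, Real.norm_eq_abs]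
    simp only [hK, Pi.add_apply]
    have e1 : |(g q.1.1 q.2 * pw q.1.1) * (g q.1.2 q.2 * pw q.1.2)|
        = |g q.1.1 q.2 * g q.1.2 q.2| * (|pw q.1.1| * |pw q.1.2|) := by
      simp only [abs_mul]
      ring
    rw [e1]
    have e2 : |g q.1.1 q.2 * g q.1.2 q.2| * (|pw q.1.1| * |pw q.1.2|)
        ≤ ((g q.1.1 q.2 ^ 2 + g q.1.2 q.2 ^ 2) / 2) * (C ^ N * C ^ N) := by
      have h1 : |pw q.1.1| * |pw q.1.2| ≤ C ^ N * C ^ N :=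
        mul_le_mul hp1 hp2 (abs_nonneg _) hCN
      exact mul_le_mul hb h1 (by positivity) (by positivity)
    refine le_trans e2 (le_of_eq ?_)
    rw [abs_of_nonneg (by positivity)]
    ring
  -- the spliced version
  have hNN : N + N = 2 * N := by omega
  set e : ((Fin N → ℝ) × (Fin N → ℝ)) ≃ᵐ (Fin (2 * N) → ℝ) := spliceEquiv N N (2 * N) hNN
    with he
  have he1 : ∀ (p : (Fin N → ℝ) × (Fin N → ℝ)) (i : Fin N) (pf : (i : ℕ) < 2 * N),
      e p ⟨(i : ℕ), pf⟩ = p.1 i := by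
    intro p i pf
    rw [he, spliceEquiv_apply, spliceFun_lt N N (2 * N) hNN p _ (by simp [i.isLt])]
  have he2 : ∀ (p : (Fin N → ℝ) × (Fin N → ℝ)) (i : Fin N) (pf : N + (i : ℕ) < 2 * N),
      e p ⟨N + (i : ℕ), pf⟩ = p.2 i := by
    intro p i pf
    rw [he, spliceEquiv_apply, spliceFun_ge N N (2 * N) hNN p _ (by simp)]
    exact congrArg p.2 (Fin.ext (by simp only [Fin.val_mk]; omega))
  set W : (Fin (2 * N) → ℝ) → ℝ := fun z => ∏ i, w (z i) with hW
  have heW : ∀ p, W (e p) = pw p.1 * pw p.2 := by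
    intro p
    show (∏ i : Fin (2 * N), w (e p i)) = pw p.1 * pw p.2
    rw [prod_split N N (2 * N) hNN (fun i => w (e p i))]
    congr 1
    · exact Finset.prod_congr rfl fun j _ => congrArg w (he1 p j _)
    · exact Finset.prod_congr rfl fun j _ => congrArg w (he2 p j _)

  have heF : ∀ p, contrInt N 0 g (e p) = ∫ s, g p.1 s * g p.2 s ∂U := by
    intro p
    rw [contrInt_zero_apply N g (e p)]
    refine integral_congr_ae (Filter.Eventually.of_forall fun s => ?_)
    rw [show (fun i : Fin N => e p ⟨(i : ℕ), by omega⟩) = p.1 from funext fun i => he1 p i _,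
      show (fun i : Fin N => e p ⟨N + (i : ℕ), by omega⟩) = p.2 from funext fun i => he2 p i _]
  set Hf : (Fin (2 * N) → ℝ) → ℝ := fun z => contrInt N 0 g z * W z with hHf
  have hHfe : ∀ p, Hf (e p) = ∫ s, K (p, s) ∂U := by
    intro p
    show contrInt N 0 g (e p) * W (e p) = _
    rw [heW p, heF p]
    rw [show (fun s => K (p, s)) = fun s => (g p.1 s * g p.2 s) * (pw p.1 * pw p.2) from
      funext fun s => by simp only [hK]; ring]
    rw [integral_mul_const]
  -- integrability of Hf
  have hHfe' : Hf ∘ e = fun p => ∫ s, K (p, s) ∂U := funext fun p => hHfe p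
  have hHfInt : Integrable Hf (cubeMeas (2 * N)) := by
    refine ((spliceEquiv_mp N N (2 * N) hNN).integrable_comp_emb e.measurableEmbedding).mp ?_
    rw [hHfe']
    exact hKint.integral_prod_left
  -- from the hypothesis: the symmetrization of Hf vanishes a.e.
  have hWsym : ∀ (σ : Equiv.Perm (Fin (2 * N))) (z : Fin (2 * N) → ℝ), W (z ∘ σ) = W z := by
    intro σ z
    show (∏ i, w ((z ∘ σ) i)) = ∏ i, w (z i)
    exact Equiv.prod_comp σ (fun i => w (z i))
  have hsymmHf : ∀ᵐ z ∂(cubeMeas (2 * N)), symmetrize (2 * N) Hf z = 0 := by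
    filter_upwards [h0'] with z hz
    have hsum : (∑ σ : Equiv.Perm (Fin (2 * N)), Hf (z ∘ σ))
        = (∑ σ : Equiv.Perm (Fin (2 * N)), contrInt N 0 g (z ∘ σ)) * W z := by
      rw [Finset.sum_mul]
      refine Finset.sum_congr rfl fun σ _ => ?_
      show contrInt N 0 g (z ∘ σ) * W (z ∘ σ) = _
      rw [hWsym σ z]
    have : symmetrize (2 * N) Hf z = symmetrize (2 * N) (contrInt N 0 g) z * W z := by
      simp only [symmetrize]
      rw [hsum, mul_assoc]
    rw [this, hz, zero_mul]
  -- conclude ∫ Hf = 0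
  have hHfσint : ∀ σ : Equiv.Perm (Fin (2 * N)),
      Integrable (fun z => Hf (z ∘ σ)) (cubeMeas (2 * N)) := by
    intro σ
    exact ((permEquiv_mp (2 * N) σ).integrable_comp_emb
      (permEquiv (2 * N) σ).measurableEmbedding).mpr hHfInt
  have hintsymm : ∫ z, symmetrize (2 * N) Hf z ∂(cubeMeas (2 * N)) = 0 := by
    rw [integral_congr_ae hsymmHf]
    simp
  have hfac : (((2 * N).factorial : ℝ)) ≠ 0 := Nat.cast_ne_zero.mpr (Nat.factorial_ne_zero _)
  have hHfzero : ∫ z, Hf z ∂(cubeMeas (2 * N)) = 0 := by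
    have e1 : ∫ z, symmetrize (2 * N) Hf z ∂(cubeMeas (2 * N))
        = ((2 * N).factorial : ℝ)⁻¹ * ∑ σ : Equiv.Perm (Fin (2 * N)),
            ∫ z, Hf (z ∘ σ) ∂(cubeMeas (2 * N)) := by
      simp only [symmetrize]
      rw [integral_const_mul]
      congr 1
      exact integral_finset_sum _ fun σ _ => hHfσint σ
    have e2 : ∀ σ : Equiv.Perm (Fin (2 * N)),
        ∫ z, Hf (z ∘ σ) ∂(cubeMeas (2 * N)) = ∫ z, Hf z ∂(cubeMeas (2 * N)) := fun σ =>
      (permEquiv_mp (2 * N) σ).integral_comp (permEquiv (2 * N) σ).measurableEmbedding Hf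
    rw [e1] at hintsymm
    rw [Finset.sum_congr rfl (fun σ _ => e2 σ), Finset.sum_const, Finset.card_univ,
      Fintype.card_perm, Fintype.card_fin, nsmul_eq_mul] at hintsymm
    have harr : (((2 * N).factorial : ℝ))⁻¹ * (((2 * N).factorial : ℝ)
        * ∫ z, Hf z ∂(cubeMeas (2 * N))) = ∫ z, Hf z ∂(cubeMeas (2 * N)) := by
      field_simp
    rw [harr] at hintsymm
    exact hintsymm
  -- Fubini
  have hHfint2 : ∫ z, Hf z ∂(cubeMeas (2 * N)) = ∫ q, K q ∂(Q.prod U) := by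
    rw [← (spliceEquiv_mp N N (2 * N) hNN).integral_comp e.measurableEmbedding Hf]
    have : ∀ p, Hf (e p) = ∫ s, K (p, s) ∂U := hHfe
    calc ∫ p, Hf (e p) ∂Q = ∫ p, ∫ s, K (p, s) ∂U ∂Q :=
          integral_congr_ae (Filter.Eventually.of_forall fun p => hHfe p)
    _ = ∫ q, K q ∂(Q.prod U) := (integral_prod K hKint).symm
  have hKswapint : Integrable (fun q : ℝ × ((Fin N → ℝ) × (Fin N → ℝ)) => K (q.2, q.1))
      (U.prod Q) := by
    have := (Measure.measurePreserving_swap (μ := U) (ν := Q)).integrable_comp_emb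
      MeasurableEquiv.prodComm.measurableEmbedding (g := K)
    exact this.mpr hKint
  have hKswap : ∫ q, K q ∂(Q.prod U)
      = ∫ s, ∫ p, K (p, s) ∂Q ∂U := by
    rw [← integral_prod_swap K]
    exact integral_prod _ hKswapint
  have hinner : ∀ s, ∫ p, K (p, s) ∂Q = Φ s * Φ s := by
    intro s
    have h := integral_prod_mul (μ := M) (ν := M) (fun x => g x s * pw x) (fun y => g y s * pw y)
    show ∫ p, K (p, s) ∂Q = (∫ x, g x s * pw x ∂M) * ∫ x, g x s * pw x ∂M
    exact h
  have hsqzero : ∫ s, Φ s ^ 2 ∂U = 0 := by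
    have : ∫ s, ∫ p, K (p, s) ∂Q ∂U = 0 := by
      rw [← hKswap, ← hHfint2, hHfzero]
    rw [← this]
    refine integral_congr_ae (Filter.Eventually.of_forall fun s => ?_)
    show Φ s ^ 2 = ∫ p, K (p, s) ∂Q
    rw [hinner s, sq]
  have hsqint : Integrable (fun s => Φ s ^ 2) U := by
    have h1 : Integrable (fun s => ∫ p, K (p, s) ∂Q) U := by
      have := hKswapint.integral_prod_left
      exact this
    refine h1.congr (Filter.Eventually.of_forall fun s => ?_)
    show ∫ p, K (p, s) ∂Q = Φ s ^ 2
    rw [hinner s, sq]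
  have hae : (fun s => Φ s ^ 2) =ᵐ[U] 0 :=
    (integral_eq_zero_iff_of_nonneg (fun s => sq_nonneg _) hsqint).mp hsqzero
  filter_upwards [hae] with s hs
  have : Φ s ^ 2 = 0 := hs
  have := pow_eq_zero_iff (n := 2) (by norm_num) |>.mp this
  exact this

end Phiw
section Phiv

variable {N : ℕ} {g : (Fin N → ℝ) → ℝ → ℝ}

theorem phiv (hmeas : Measurable (Function.uncurry g))
    (hL2 : MemLp (Function.uncurry g) 2 ((cubeMeas N).prod unifMeas))
    (h0 : ∀ᵐ z ∂(cubeMeas (2 * (N - 0))), symmetrize _ (contrInt N 0 g) z = 0)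
    (w : ℝ → ℝ) (hw : Measurable w) (C : ℝ) (hwb : ∀ t, |w t| ≤ C)
    (v : ℝ → ℝ) (hv : Measurable v) (D : ℝ) (hvb : ∀ t, |v t| ≤ D) :
    ∫ p, Function.uncurry g p * (∏ i, w (p.1 i)) * v p.2 ∂((cubeMeas N).prod unifMeas) = 0 := by
  have hΦ := phiw hmeas hL2 h0 w hw C hwb
  set M : Measure (Fin N → ℝ) := cubeMeas N with hM
  set U : Measure ℝ := unifMeas with hU
  have hGint : Integrable (Function.uncurry g) (M.prod U) := hL2.integrable one_le_two
  have hC0 : (0:ℝ) ≤ C := le_trans (abs_nonneg _) (hwb 0)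
  have hD0 : (0:ℝ) ≤ D := le_trans (abs_nonneg _) (hvb 0)
  set pw : (Fin N → ℝ) → ℝ := fun x => ∏ i, w (x i) with hpw
  have hpwm : Measurable pw := Finset.measurable_prod _ fun i _ => hw.comp (measurable_pi_apply i)
  have hpwb : ∀ x, |pw x| ≤ C ^ N := by
    intro x
    calc |∏ i, w (x i)| = ∏ i, |w (x i)| := by rw [Finset.abs_prod]
    _ ≤ ∏ _i : Fin N, C := Finset.prod_le_prod (fun i _ => abs_nonneg _) (fun i _ => hwb _)
    _ = C ^ N := by simp [Finset.prod_const]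
  set f : (Fin N → ℝ) × ℝ → ℝ := fun p => Function.uncurry g p * pw p.1 * v p.2 with hf
  have hfm : Measurable f :=
    (hmeas.mul (hpwm.comp measurable_fst)).mul (hv.comp measurable_snd)
  have hfint : Integrable f (M.prod U) := by
    refine Integrable.mono (hGint.abs.const_mul (C ^ N * D)) hfm.aestronglyMeasurable ?_
    refine Filter.Eventually.of_forall fun p => ?_
    rw [Real.norm_eq_abs, Real.norm_eq_abs]
    simp only [hf]
    have e1 : |Function.uncurry g p * pw p.1 * v p.2|
        = |Function.uncurry g p| * (|pw p.1| * |v p.2|) := by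
      simp only [abs_mul]; ring
    rw [e1]
    have e2 : |pw p.1| * |v p.2| ≤ C ^ N * D :=
      mul_le_mul (hpwb _) (hvb _) (abs_nonneg _) (pow_nonneg hC0 N)
    calc |Function.uncurry g p| * (|pw p.1| * |v p.2|)
        ≤ |Function.uncurry g p| * (C ^ N * D) :=
          mul_le_mul_of_nonneg_left e2 (abs_nonneg _)
    _ = C ^ N * D * |Function.uncurry g p| := by ring
    _ ≤ abs (C ^ N * D * abs (Function.uncurry g p)) := le_abs_self _
  have hswapint : Integrable (fun z : ℝ × ((Fin N → ℝ)) => f z.swap) (U.prod M) := by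
    have := (Measure.measurePreserving_swap (μ := U) (ν := M)).integrable_comp_emb
      MeasurableEquiv.prodComm.measurableEmbedding (g := f)
    exact this.mpr hfint
  have hchain : ∫ p, f p ∂(M.prod U) = ∫ s, ∫ x, f (x, s) ∂M ∂U := by
    rw [← integral_prod_swap f]
    exact integral_prod _ hswapint
  have hinner : ∀ s, ∫ x, f (x, s) ∂M = (∫ x, g x s * pw x ∂M) * v s := by
    intro s
    exact integral_mul_const (v s) (fun x => g x s * pw x)
  have : ∫ p, f p ∂(M.prod U) = 0 := by
    rw [hchain]
    have : ∀ᵐ s ∂U, (∫ x, f (x, s) ∂M) = 0 := by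
      filter_upwards [hΦ] with s hs
      rw [hinner s]
      have : (∫ x, g x s * pw x ∂M) = 0 := hs
      rw [this, zero_mul]
    rw [integral_congr_ae this]
    simp
  exact this

end Phiv
section BoxZero

variable {N : ℕ} {g : (Fin N → ℝ) → ℝ → ℝ}

theorem box_zero (hmeas : Measurable (Function.uncurry g))
    (hL2 : MemLp (Function.uncurry g) 2 ((cubeMeas N).prod unifMeas))
    (hsym : ∀ (σ : Equiv.Perm (Fin N)) (x : Fin N → ℝ) (s : ℝ), g (x ∘ σ) s = g x s)
    (h0 : ∀ᵐ z ∂(cubeMeas (2 * (N - 0))), symmetrize _ (contrInt N 0 g) z = 0)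
    (u : Fin N → ℝ → ℝ) (hu : ∀ i, Measurable (u i)) (C : ℝ) (hub : ∀ i t, |u i t| ≤ C)
    (v : ℝ → ℝ) (hv : Measurable v) (D : ℝ) (hvb : ∀ t, |v t| ≤ D) :
    ∫ p, Function.uncurry g p * (∏ i, u i (p.1 i)) * v p.2 ∂((cubeMeas N).prod unifMeas) = 0 := by
  classical
  set M : Measure (Fin N → ℝ) := cubeMeas N with hM
  set U : Measure ℝ := unifMeas with hU
  have hGint : Integrable (Function.uncurry g) (M.prod U) := hL2.integrable one_le_two
  have hD0 : (0:ℝ) ≤ D := le_trans (abs_nonneg _) (hvb 0)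
  -- generic integrability of the test integrands
  have hint : ∀ (t : Fin N → ℝ → ℝ) (E : ℝ), (∀ i, Measurable (t i)) → (∀ i x, |t i x| ≤ E) →
      Integrable (fun p : (Fin N → ℝ) × ℝ =>
        Function.uncurry g p * (∏ i, t i (p.1 i)) * v p.2) (M.prod U) := by
    intro t E ht htb
    have hptm : Measurable fun x : Fin N → ℝ => ∏ i, t i (x i) :=
      Finset.measurable_prod _ fun i _ => (ht i).comp (measurable_pi_apply i)
    have hptb : ∀ x : Fin N → ℝ, |∏ i, t i (x i)| ≤ E ^ N := by
      intro x
      calc |∏ i, t i (x i)| = ∏ i, |t i (x i)| := by rw [Finset.abs_prod]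
      _ ≤ ∏ _i : Fin N, E := Finset.prod_le_prod (fun i _ => abs_nonneg _) (fun i _ => htb _ _)
      _ = E ^ N := by simp [Finset.prod_const]
    have hEN0 : (0:ℝ) ≤ E ^ N := le_trans (abs_nonneg _) (hptb (fun _ => 0))
    have hfm : Measurable fun p : (Fin N → ℝ) × ℝ =>
        Function.uncurry g p * (∏ i, t i (p.1 i)) * v p.2 :=
      (hmeas.mul (hptm.comp measurable_fst)).mul (hv.comp measurable_snd)
    refine Integrable.mono (hGint.abs.const_mul (E ^ N * D)) hfm.aestronglyMeasurable ?_
    refine Filter.Eventually.of_forall fun p => ?_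
    rw [Real.norm_eq_abs, Real.norm_eq_abs]
    have e1 : |Function.uncurry g p * (∏ i, t i (p.1 i)) * v p.2|
        = |Function.uncurry g p| * (|∏ i, t i (p.1 i)| * |v p.2|) := by
      simp only [abs_mul]; ring
    rw [e1]
    have e2 : |∏ i, t i (p.1 i)| * |v p.2| ≤ E ^ N * D :=
      mul_le_mul (hptb _) (hvb _) (abs_nonneg _) hEN0
    calc |Function.uncurry g p| * (|∏ i, t i (p.1 i)| * |v p.2|)
        ≤ |Function.uncurry g p| * (E ^ N * D) :=
          mul_le_mul_of_nonneg_left e2 (abs_nonneg _)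
    _ = E ^ N * D * |Function.uncurry g p| := by ring
    _ ≤ abs (E ^ N * D * abs (Function.uncurry g p)) := le_abs_self _
  set J : (Fin N → Fin N) → ℝ := fun m =>
    ∫ p, Function.uncurry g p * (∏ i, u (m i) (p.1 i)) * v p.2 ∂(M.prod U) with hJ
  have hJint : ∀ m : Fin N → Fin N, Integrable (fun p : (Fin N → ℝ) × ℝ =>
      Function.uncurry g p * (∏ i, u (m i) (p.1 i)) * v p.2) (M.prod U) :=
    fun m => hint (fun i => u (m i)) C (fun i => hu _) (fun i x => hub _ _)
  set I : ℝ := ∫ p, Function.uncurry g p * (∏ i, u i (p.1 i)) * v p.2 ∂(M.prod U) with hI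
  -- invariance under bijections
  have hbij : ∀ m : Fin N → Fin N, Function.Bijective m → J m = I := by
    intro m hm
    set σ : Equiv.Perm (Fin N) := (Equiv.ofBijective m hm).symm with hσ
    have hmσ : ∀ i, m (σ i) = i := fun i => (Equiv.ofBijective m hm).apply_symm_apply i
    set Ψ : ((Fin N → ℝ) × ℝ) ≃ᵐ ((Fin N → ℝ) × ℝ) :=
      (permEquiv N σ).prodCongr (MeasurableEquiv.refl ℝ) with hΨ
    have hΨmp : MeasurePreserving Ψ (M.prod U) (M.prod U) := by
      have h1 : MeasurePreserving (Prod.map (permEquiv N σ) (id : ℝ → ℝ)) (M.prod U)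
          (M.prod U) := (permEquiv_mp N σ).prod (MeasurePreserving.id U)
      exact ⟨Ψ.measurable, by
        rw [show (⇑Ψ) = Prod.map (permEquiv N σ) id from rfl]; exact h1.map_eq⟩
    set f0 : (Fin N → ℝ) × ℝ → ℝ :=
      fun p => Function.uncurry g p * (∏ i, u i (p.1 i)) * v p.2 with hf0
    have key : ∀ p : (Fin N → ℝ) × ℝ,
        f0 (Ψ p) = Function.uncurry g p * (∏ i, u (m i) (p.1 i)) * v p.2 := by
      intro p
      show Function.uncurry g (p.1 ∘ σ, p.2) * (∏ i, u i ((p.1 ∘ σ) i)) * v p.2 = _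
      have e1 : Function.uncurry g (p.1 ∘ σ, p.2) = Function.uncurry g p := by
        show g (p.1 ∘ σ) p.2 = g p.1 p.2
        rw [hsym σ p.1 p.2]
      have e2 : (∏ i, u i ((p.1 ∘ σ) i)) = ∏ j, u (m j) (p.1 j) := by
        rw [← Equiv.prod_comp σ (fun j => u (m j) (p.1 j))]
        refine Finset.prod_congr rfl fun i _ => ?_
        show u i ((p.1 ∘ σ) i) = u (m (σ i)) (p.1 (σ i))
        rw [hmσ i]
        rfl
      rw [e1, e2]
    have hJm : J m = ∫ p, f0 (Ψ p) ∂(M.prod U) := by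
      show (∫ p, Function.uncurry g p * (∏ i, u (m i) (p.1 i)) * v p.2 ∂(M.prod U))
        = ∫ p, f0 (Ψ p) ∂(M.prod U)
      exact integral_congr_ae (Filter.Eventually.of_forall fun p => (key p).symm)
    rw [hJm, hΨmp.integral_comp Ψ.measurableEmbedding f0]
  -- expansion : sum over functions into S
  have hexp : ∀ S : Finset (Fin N),
      (∑ m ∈ Fintype.piFinset (fun _ : Fin N => S), J m) = 0 := by
    intro S
    have hwm : Measurable (fun x : ℝ => ∑ j ∈ S, u j x) :=
      Finset.measurable_sum S fun j _ => hu j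
    have hwb : ∀ x : ℝ, |∑ j ∈ S, u j x| ≤ (S.card : ℝ) * C := by
      intro x
      calc |∑ j ∈ S, u j x| ≤ ∑ j ∈ S, |u j x| := Finset.abs_sum_le_sum_abs _ _
      _ ≤ ∑ _j ∈ S, C := Finset.sum_le_sum fun j _ => hub j x
      _ = (S.card : ℝ) * C := by rw [Finset.sum_const, nsmul_eq_mul]
    have h3 := phiv hmeas hL2 h0 _ hwm _ hwb v hv D hvb
    have hpoint : ∀ p : (Fin N → ℝ) × ℝ,
        Function.uncurry g p * (∏ i, (∑ j ∈ S, u j (p.1 i))) * v p.2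
        = ∑ m ∈ Fintype.piFinset (fun _ : Fin N => S),
            Function.uncurry g p * (∏ i, u (m i) (p.1 i)) * v p.2 := by
      intro p
      rw [Finset.prod_univ_sum]
      rw [Finset.mul_sum, Finset.sum_mul]
    calc (∑ m ∈ Fintype.piFinset (fun _ : Fin N => S), J m)
        = ∫ p, ∑ m ∈ Fintype.piFinset (fun _ : Fin N => S),
            Function.uncurry g p * (∏ i, u (m i) (p.1 i)) * v p.2 ∂(M.prod U) :=
          (integral_finset_sum _ (fun m _ => hJint m)).symm
    _ = ∫ p, Function.uncurry g p * (∏ i, (∑ j ∈ S, u j (p.1 i))) * v p.2 ∂(M.prod U) :=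
          integral_congr_ae (Filter.Eventually.of_forall fun p => (hpoint p).symm)
    _ = 0 := h3
  -- inclusion exclusion coefficient
  have hcoeff : ∀ m : Fin N → Fin N,
      (∑ S ∈ (Finset.univ : Finset (Fin N)).powerset,
        if (∀ i, m i ∈ S) then ((-1:ℝ)) ^ S.card else 0)
      = if Function.Bijective m then ((-1:ℝ)) ^ N else 0 := by
    intro m
    set R : Finset (Fin N) := Finset.image m Finset.univ with hR
    have hcond : ∀ S : Finset (Fin N), (∀ i, m i ∈ S) ↔ R ⊆ S := by
      intro S
      rw [hR, Finset.image_subset_iff]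
      simp
    have e0 : (∑ S ∈ (Finset.univ : Finset (Fin N)).powerset,
          if (∀ i, m i ∈ S) then ((-1:ℝ)) ^ S.card else 0)
        = ∑ S ∈ (Finset.univ : Finset (Fin N)).powerset.filter (fun S => R ⊆ S),
            ((-1:ℝ)) ^ S.card := by
      rw [Finset.sum_filter]
      exact Finset.sum_congr rfl fun S _ => by rw [if_congr (hcond S) rfl rfl]
    rw [e0]
    have himg : ((Finset.univ : Finset (Fin N)).powerset.filter (fun S => R ⊆ S))
        = ((Finset.univ \ R).powerset).image (fun T => R ∪ T) := by
      ext S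
      simp only [Finset.mem_filter, Finset.mem_powerset, Finset.mem_image]
      constructor
      · rintro ⟨-, hRS⟩
        exact ⟨S \ R, by
          constructor
          · exact Finset.sdiff_subset_sdiff (Finset.subset_univ S) (le_refl R)
          · exact Finset.union_sdiff_of_subset hRS⟩
      · rintro ⟨T, hT, rfl⟩
        exact ⟨Finset.subset_univ _, Finset.subset_union_left⟩
    have hdisj : ∀ T ∈ (Finset.univ \ R).powerset, Disjoint R T := by
      intro T hT
      rw [Finset.mem_powerset] at hT
      exact (Finset.sdiff_disjoint.mono_left hT).symm
    have hinj : ∀ T1 ∈ (Finset.univ \ R).powerset, ∀ T2 ∈ (Finset.univ \ R).powerset,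
        R ∪ T1 = R ∪ T2 → T1 = T2 := by
      intro T1 h1 T2 h2 he
      have e1 : (R ∪ T1) \ R = T1 := Finset.union_sdiff_cancel_left (hdisj T1 h1)
      have e2 : (R ∪ T2) \ R = T2 := Finset.union_sdiff_cancel_left (hdisj T2 h2)
      rw [← e1, ← e2, he]
    rw [himg, Finset.sum_image hinj]
    have hcard : ∀ T ∈ (Finset.univ \ R).powerset,
        ((-1:ℝ)) ^ (R ∪ T).card = ((-1:ℝ)) ^ R.card * ((-1:ℝ)) ^ T.card := by
      intro T hT
      rw [Finset.card_union_of_disjoint (hdisj T hT), pow_add]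
    rw [Finset.sum_congr rfl hcard, ← Finset.mul_sum]
    have hzsum : (∑ T ∈ (Finset.univ \ R).powerset, ((-1:ℝ)) ^ T.card)
        = if (Finset.univ \ R) = ∅ then (1:ℝ) else 0 := by
      have hz := Finset.sum_powerset_neg_one_pow_card (x := Finset.univ \ R)
      have h2 : ((∑ T ∈ (Finset.univ \ R).powerset, (-1:ℤ) ^ T.card : ℤ) : ℝ)
          = ∑ T ∈ (Finset.univ \ R).powerset, ((-1:ℝ)) ^ T.card := by
        push_cast
        rfl
      rw [← h2, hz]
      split_ifs <;> simp
    rw [hzsum]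
    by_cases hRuniv : R = Finset.univ
    · have hempty : Finset.univ \ R = ∅ := by rw [hRuniv, Finset.sdiff_self]
      rw [if_pos hempty]
      have hsurj : Function.Surjective m := by
        intro j
        have : j ∈ R := hRuniv ▸ Finset.mem_univ j
        rw [hR] at this
        simpa using (Finset.mem_image.mp this).imp fun i hi => hi.2
      have hbijm : Function.Bijective m :=
        ⟨Finite.injective_iff_surjective.mpr hsurj, hsurj⟩
      rw [if_pos hbijm]
      have : R.card = N := by rw [hRuniv]; simp
      rw [this, mul_one]
    · have hnonempty : Finset.univ \ R ≠ ∅ := by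
        intro hc
        exact hRuniv (Finset.univ_subset_iff.mp (Finset.sdiff_eq_empty_iff_subset.mp hc))
      rw [if_neg hnonempty, mul_zero]
      have hnbij : ¬ Function.Bijective m := by
        intro hbijm
        apply hRuniv
        apply Finset.eq_univ_iff_forall.mpr
        intro j
        obtain ⟨i, hi⟩ := hbijm.2 j
        rw [hR]
        exact Finset.mem_image.mpr ⟨i, Finset.mem_univ i, hi⟩
      rw [if_neg hnbij]
  -- put everything together
  have hfilt : ∀ S : Finset (Fin N), Fintype.piFinset (fun _ : Fin N => S)
      = Finset.univ.filter (fun m : Fin N → Fin N => ∀ i, m i ∈ S) := by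
    intro S
    ext m
    simp [Fintype.mem_piFinset]
  have h4 : (∑ S ∈ (Finset.univ : Finset (Fin N)).powerset, ∑ m : Fin N → Fin N,
      (if (∀ i, m i ∈ S) then ((-1:ℝ)) ^ S.card * J m else 0)) = 0 := by
    refine Finset.sum_eq_zero fun S _ => ?_
    have : (∑ m : Fin N → Fin N, (if (∀ i, m i ∈ S) then ((-1:ℝ)) ^ S.card * J m else 0))
        = ((-1:ℝ)) ^ S.card * ∑ m ∈ Fintype.piFinset (fun _ : Fin N => S), J m := by
      rw [hfilt S, Finset.sum_filter, Finset.mul_sum]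
      refine Finset.sum_congr rfl fun m _ => ?_
      split_ifs <;> simp
    rw [this, hexp S, mul_zero]
  rw [Finset.sum_comm] at h4
  have h5 : (∑ m : Fin N → Fin N,
      (if Function.Bijective m then ((-1:ℝ)) ^ N else 0) * J m) = 0 := by
    calc (∑ m : Fin N → Fin N, (if Function.Bijective m then ((-1:ℝ)) ^ N else 0) * J m)
        = ∑ m : Fin N → Fin N, ∑ S ∈ (Finset.univ : Finset (Fin N)).powerset,
            (if (∀ i, m i ∈ S) then ((-1:ℝ)) ^ S.card * J m else 0) := by
          refine Finset.sum_congr rfl fun m _ => ?_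
          rw [← hcoeff m, Finset.sum_mul]
          refine Finset.sum_congr rfl fun S _ => ?_
          split_ifs <;> simp
    _ = 0 := h4
  have h6 : (∑ m ∈ Finset.univ.filter (fun m : Fin N → Fin N => Function.Bijective m),
      ((-1:ℝ)) ^ N * J m) = 0 := by
    calc (∑ m ∈ Finset.univ.filter (fun m : Fin N → Fin N => Function.Bijective m),
        ((-1:ℝ)) ^ N * J m)
        = ∑ m : Fin N → Fin N, (if Function.Bijective m then ((-1:ℝ)) ^ N else 0) * J m := by
          rw [Finset.sum_filter]
          refine Finset.sum_congr rfl fun m _ => ?_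
          split_ifs <;> simp
    _ = 0 := h5
  have h7 : (∑ m ∈ Finset.univ.filter (fun m : Fin N → Fin N => Function.Bijective m),
      ((-1:ℝ)) ^ N * J m)
      = ((Finset.univ.filter (fun m : Fin N → Fin N => Function.Bijective m)).card : ℝ)
        * (((-1:ℝ)) ^ N * I) := by
    rw [Finset.sum_congr rfl (fun m hm => by
      rw [hbij m (Finset.mem_filter.mp hm).2]), Finset.sum_const, nsmul_eq_mul]
  rw [h7] at h6
  have hcardpos : (0:ℝ) <
      ((Finset.univ.filter (fun m : Fin N → Fin N => Function.Bijective m)).card : ℝ) := by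
    have : id ∈ Finset.univ.filter (fun m : Fin N → Fin N => Function.Bijective m) :=
      Finset.mem_filter.mpr ⟨Finset.mem_univ _, Function.bijective_id⟩
    have := Finset.card_pos.mpr ⟨id, this⟩
    exact_mod_cast this
  have hne : (((-1:ℝ)) ^ N) ≠ 0 := pow_ne_zero _ (by norm_num)
  rcases mul_eq_zero.mp h6 with h | h
  · exact absurd h (ne_of_gt hcardpos)
  rcases mul_eq_zero.mp h with h' | h'
  · exact absurd h' hne
  · exact h'

end BoxZero
section Gzero

variable {N : ℕ} {g : (Fin N → ℝ) → ℝ → ℝ}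

theorem gzero (hmeas : Measurable (Function.uncurry g))
    (hL2 : MemLp (Function.uncurry g) 2 ((cubeMeas N).prod unifMeas))
    (hsym : ∀ (σ : Equiv.Perm (Fin N)) (x : Fin N → ℝ) (s : ℝ), g (x ∘ σ) s = g x s)
    (h0 : ∀ᵐ z ∂(cubeMeas (2 * (N - 0))), symmetrize _ (contrInt N 0 g) z = 0) :
    Function.uncurry g =ᵐ[(cubeMeas N).prod unifMeas] 0 := by
  classical
  set P : Measure ((Fin N → ℝ) × ℝ) := (cubeMeas N).prod unifMeas with hP
  have hGint : Integrable (Function.uncurry g) P := hL2.integrable one_le_two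
  set CC : Set (Set (Fin N → ℝ)) :=
    Set.univ.pi '' Set.univ.pi (fun _ : Fin N => {s : Set ℝ | MeasurableSet s}) with hCC
  set Cs : Set (Set ((Fin N → ℝ) × ℝ)) :=
    Set.image2 (· ×ˢ ·) CC {t : Set ℝ | MeasurableSet t} with hCs
  have hunivCC : Set.univ ∈ CC := by
    rw [hCC]
    refine ⟨fun _ => Set.univ, ?_, ?_⟩
    · intro i _
      simp
    · exact Set.pi_univ _
  have hCCspan : IsCountablySpanning CC :=
    ⟨fun _ => Set.univ, fun _ => hunivCC, Set.iUnion_const _⟩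
  have hgen : (inferInstance : MeasurableSpace ((Fin N → ℝ) × ℝ))
      = MeasurableSpace.generateFrom Cs := by
    have h1 : MeasurableSpace.generateFrom CC = (inferInstance : MeasurableSpace (Fin N → ℝ)) :=
      generateFrom_pi
    have h2 : MeasurableSpace.generateFrom {t : Set ℝ | MeasurableSet t}
        = (inferInstance : MeasurableSpace ℝ) := MeasurableSpace.generateFrom_measurableSet
    exact (generateFrom_eq_prod h1 h2 hCCspan isCountablySpanning_measurableSet).symm
  have hpisys : IsPiSystem Cs := IsPiSystem.prod isPiSystem_pi MeasurableSpace.isPiSystem_measurableSet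
  have hbasic : ∀ A ∈ Cs, ∫ p in A, Function.uncurry g p ∂P = 0 := by
    rintro A ⟨Bpi, hBpi, Js, hJ, rfl⟩
    obtain ⟨B, hB, rfl⟩ := hBpi
    have hBm : ∀ i, MeasurableSet (B i) := fun i => hB i (Set.mem_univ i)
    have hJm : MeasurableSet Js := hJ
    have hAm : MeasurableSet ((Set.univ.pi B) ×ˢ Js) := (MeasurableSet.univ_pi hBm).prod hJm
    rw [← integral_indicator hAm]
    have hpoint : ∀ p : (Fin N → ℝ) × ℝ,
        ((Set.univ.pi B) ×ˢ Js).indicator (Function.uncurry g) p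
        = Function.uncurry g p * (∏ i, (if p.1 i ∈ B i then (1:ℝ) else 0))
          * (if p.2 ∈ Js then (1:ℝ) else 0) := by
      intro p
      rw [Set.indicator_apply, Fintype.prod_boole]
      by_cases h1 : (∀ i, p.1 i ∈ B i) <;> by_cases h2 : p.2 ∈ Js <;>
        simp [h1, h2, Set.mem_prod, Set.mem_univ_pi]
    rw [integral_congr_ae (Filter.Eventually.of_forall hpoint)]
    exact box_zero hmeas hL2 hsym h0 (fun i t => if t ∈ B i then 1 else 0)
      (fun i => Measurable.ite (hBm i) measurable_const measurable_const) 1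
      (fun i t => by by_cases h : t ∈ B i <;> simp [h])
      (fun t => if t ∈ Js then 1 else 0) (Measurable.ite hJm measurable_const measurable_const) 1
      (fun t => by by_cases h : t ∈ Js <;> simp [h])
  have hunivCs : (Set.univ : Set ((Fin N → ℝ) × ℝ)) ∈ Cs := by
    rw [hCs]
    refine Set.mem_image2.mpr ⟨Set.univ, hunivCC, Set.univ, by simp, ?_⟩
    exact Set.univ_prod_univ
  have htot : ∫ p, Function.uncurry g p ∂P = 0 := by
    have h := hbasic Set.univ hunivCs
    simpa [Measure.restrict_univ] using h
  have hall : ∀ A : Set ((Fin N → ℝ) × ℝ), MeasurableSet A →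
      ∫ p in A, Function.uncurry g p ∂P = 0 := by
    intro A hA
    refine MeasurableSpace.induction_on_inter
      (C := fun t _ => ∫ p in t, Function.uncurry g p ∂P = 0) hgen hpisys ?_ hbasic ?_ ?_ A hA
    · simp
    · intro t ht hint0
      have hy := integral_add_compl ht hGint
      rw [hint0, htot] at hy
      linarith
    · intro f hdisj hmeasf h0f
      rw [integral_iUnion hmeasf hdisj hGint.integrableOn]
      simp [h0f]
  exact hGint.ae_eq_zero_of_forall_setIntegral_eq_zero (fun s hs _ => hall s hs)

end Gzero
section Final

variable {N : ℕ} {g : (Fin N → ℝ) → ℝ → ℝ}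

theorem contr_zero (hg0 : Function.uncurry g =ᵐ[(cubeMeas N).prod unifMeas] 0)
    (k : ℕ) (hk : k ≤ N) :
    ∀ᵐ z ∂(cubeMeas (2 * (N - k))), contrInt N k g z = 0 := by
  have hmk : (N - k) + k = N := by omega
  have hmm : (N - k) + (N - k) = 2 * (N - k) := by omega
  set U : Measure ℝ := unifMeas with hU
  -- the pullback map
  set ρ : (Fin (N - k) → ℝ) × (ℝ × (Fin k → ℝ)) → (Fin N → ℝ) × ℝ :=
    fun q => (splice N k q.1 q.2.2, q.2.1) with hρdef
  have hρ : MeasurePreserving ρ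
      ((cubeMeas (N - k)).prod (U.prod (cubeMeas k))) ((cubeMeas N).prod U) := by
    have step1 : MeasurePreserving (Prod.map (id : (Fin (N - k) → ℝ) → _) (Prod.swap : ℝ × (Fin k → ℝ) → _))
        ((cubeMeas (N - k)).prod (U.prod (cubeMeas k)))
        ((cubeMeas (N - k)).prod ((cubeMeas k).prod U)) :=
      (MeasurePreserving.id _).prod Measure.measurePreserving_swap
    have step2 : MeasurePreserving (MeasurableEquiv.prodAssoc.symm)
        ((cubeMeas (N - k)).prod ((cubeMeas k).prod U))
        (((cubeMeas (N - k)).prod (cubeMeas k)).prod U) :=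
      (measurePreserving_prodAssoc (cubeMeas (N - k)) (cubeMeas k) U).symm
        MeasurableEquiv.prodAssoc
    have step3 : MeasurePreserving
        (Prod.map (spliceEquiv (N - k) k N hmk) (id : ℝ → ℝ))
        (((cubeMeas (N - k)).prod (cubeMeas k)).prod U) ((cubeMeas N).prod U) :=
      (spliceEquiv_mp (N - k) k N hmk).prod (MeasurePreserving.id U)
    have hcomp := step3.comp (step2.comp step1)
    exact hcomp
  have hg0' : ∀ᵐ p ∂((cubeMeas N).prod U), Function.uncurry g p = 0 := hg0
  have hae3 := hρ.ae_comp hg0'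
  have h1 : ∀ᵐ x ∂(cubeMeas (N - k)), ∀ᵐ s ∂U, ∀ᵐ u ∂(cubeMeas k),
      g (splice N k x u) s = 0 := by
    have h2 := Measure.ae_ae_of_ae_prod hae3
    filter_upwards [h2] with x hx
    exact Measure.ae_ae_of_ae_prod hx
  -- transport to the cube of dimension 2 * (N - k)
  set e2 : ((Fin (N - k) → ℝ) × (Fin (N - k) → ℝ)) ≃ᵐ (Fin (2 * (N - k)) → ℝ) :=
    spliceEquiv (N - k) (N - k) (2 * (N - k)) hmm with he2
  have he2mp : MeasurePreserving e2.symm (cubeMeas (2 * (N - k)))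
      ((cubeMeas (N - k)).prod (cubeMeas (N - k))) :=
    (spliceEquiv_mp (N - k) (N - k) (2 * (N - k)) hmm).symm e2
  have hfstmp : MeasurePreserving
      (fun z : Fin (2 * (N - k)) → ℝ => (e2.symm z).1)
      (cubeMeas (2 * (N - k))) (cubeMeas (N - k)) :=
    (mp_fst (cubeMeas (N - k)) (cubeMeas (N - k))).comp he2mp
  have hproj1 : ∀ᵐ z ∂(cubeMeas (2 * (N - k))),
      (∀ᵐ s ∂U, ∀ᵐ u ∂(cubeMeas k),
        g (splice N k (fun j => z (Fin.castLE (by omega) j)) u) s = 0) := by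
    have := hfstmp.ae_comp h1
    exact this
  filter_upwards [hproj1] with z hz1
  rw [contrInt_apply]
  have hs : (fun s => (∫ u, g (splice N k (fun j => z (Fin.castLE (by omega) j)) u) s *
      g (splice N k (fun j => z ⟨(N - k) + (j : ℕ), by omega⟩) u) s ∂(cubeMeas k)))
      =ᵐ[U] 0 := by
    filter_upwards [hz1] with s hsz
    have hzero : (fun u => g (splice N k (fun j => z (Fin.castLE (by omega) j)) u) s *
        g (splice N k (fun j => z ⟨(N - k) + (j : ℕ), by omega⟩) u) s) =ᵐ[cubeMeas k] 0 := by
      filter_upwards [hsz] with u hu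
      rw [hu, zero_mul]
      rfl
    show (∫ u, _ ∂(cubeMeas k)) = 0
    rw [integral_congr_ae hzero]
    simp
  rw [integral_congr_ae hs]
  simp

theorem symm_zero (n : ℕ) (F : (Fin n → ℝ) → ℝ)
    (h : ∀ᵐ z ∂(cubeMeas n), F z = 0) :
    ∀ᵐ z ∂(cubeMeas n), symmetrize n F z = 0 := by
  have hall : ∀ᵐ z ∂(cubeMeas n), ∀ σ : Equiv.Perm (Fin n), F (z ∘ σ) = 0 := by
    rw [ae_all_iff]
    intro σ
    exact (permEquiv_mp n σ).ae_comp h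
  filter_upwards [hall] with z hz
  simp only [symmetrize]
  rw [Finset.sum_congr rfl (fun σ _ => hz σ), Finset.sum_const]
  simp

theorem stmt_12' (N : ℕ) (hN : 1 ≤ N) (g : (Fin N → ℝ) → ℝ → ℝ)
    (hmeas : Measurable (Function.uncurry g))
    (hL2 : MemLp (Function.uncurry g) 2 ((cubeMeas N).prod unifMeas))
    (hsym : ∀ (σ : Equiv.Perm (Fin N)) (x : Fin N → ℝ) (s : ℝ), g (x ∘ σ) s = g x s)
    (h0 : ∀ᵐ z ∂(cubeMeas (2 * (N - 0))), symmetrize _ (contrInt N 0 g) z = 0) :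
    ∀ k, 1 ≤ k → k ≤ N - 1 →
      ∀ᵐ z ∂(cubeMeas (2 * (N - k))), symmetrize _ (contrInt N k g) z = 0 := by
  intro k hk1 hkN
  have hg0 := gzero hmeas hL2 hsym h0
  have hc := contr_zero hg0 k (by omega)
  exact symm_zero _ _ hc

end Final

/-- Let `g ∈ L²([0,1]^{N+1})` be symmetric in its first `N` variables. If the symmetrized
contraction `∫₀¹ g(·,s) ⊗̃ g(·,s) ds` vanishes a.e. on `[0,1]^{2N}`, then for every
`k = 1, …, N-1` the symmetrized `k`-th contraction `∫₀¹ g(·,s) ⊗̃_k g(·,s) ds` vanishes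
a.e. on `[0,1]^{2N-2k}`. -/
theorem stmt_12 (N : ℕ) (hN : 1 ≤ N) (g : (Fin N → ℝ) → ℝ → ℝ)
    (hmeas : Measurable (Function.uncurry g))
    (hL2 : MemLp (Function.uncurry g) 2 ((cubeMeas N).prod unifMeas))
    (hsym : ∀ (σ : Equiv.Perm (Fin N)) (x : Fin N → ℝ) (s : ℝ), g (x ∘ σ) s = g x s)
    (h0 : ∀ᵐ z ∂(cubeMeas (2 * (N - 0))), symmetrize _ (contrInt N 0 g) z = 0) :
    ∀ k, 1 ≤ k → k ≤ N - 1 →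
      ∀ᵐ z ∂(cubeMeas (2 * (N - k))), symmetrize _ (contrInt N k g) z = 0 := by
  exact stmt_12' N hN g hmeas hL2 hsym h0
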